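/- Let n > m ≥ 2, and let F_n, F_m : [0,1] → [0,1] be open piecewise monotone maps with n−1 resp. m−1 critical points satisfying F_n ∘ F_m^{-1} = F_m^{-1} ∘ F_n. Let 0 < t_1 < … < t_{n-1} < 1 be the critical points of F_n and 0 < t̂_1 < … < t̂_{m-1} < 1 the critical points of F_m. Then for all admissible i, j: t_i < t̂_j < t_{i+1} if and only if i = ⌊(n/m)·j⌋. -/

import Mathlib

open Filter Set

section Defs

variable {Y : Type*}

/-- An `n`-orbit of a set-valued map `F`: a tuple `(x 0, …, x (n-1))` with
`x (k+1) ∈ F (x k)`. -/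
def IsOrbit (F : Y → Set Y) (n : ℕ) (x : ℕ → Y) : Prop :=
  ∀ k : ℕ, k + 1 < n → x (k + 1) ∈ F (x k)

/-- A set `S` of `n`-tuples is `(n,ε)`-separated w.r.t. the distance `d`. -/
def IsSepTuples (d : Y → Y → ℝ) (n : ℕ) (ε : ℝ) (S : Set (ℕ → Y)) : Prop :=
  ∀ x ∈ S, ∀ y ∈ S, (∃ k < n, x k ≠ y k) → ∃ k < n, ε < d (x k) (y k)

/-- The maximal cardinality of an `(n,ε)`-separated set of `n`-orbits of `F`. -/
noncomputable def sepCountD (d : Y → Y → ℝ) (F : Y → Set Y) (n : ℕ) (ε : ℝ) : ℕ :=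
  sSup {m : ℕ | ∃ S : Finset (ℕ → Y),
    (∀ x ∈ S, IsOrbit F n x) ∧ IsSepTuples d n ε ↑S ∧ S.card = m}

/-- Topological entropy of a set-valued map `F`, with respect to a distance
function `d`, via `(n,ε)`-separated sets of orbits. -/
noncomputable def svEntD (d : Y → Y → ℝ) (F : Y → Set Y) : EReal :=
  ⨆ (ε : ℝ) (_ : 0 < ε),
    Filter.atTop.limsup fun n : ℕ =>
      ((Real.log (sepCountD d F n ε) / n : ℝ) : EReal)

/-- Topological entropy of a set-valued map on a metric space. -/
noncomputable def svEnt [PseudoMetricSpace Y] (F : Y → Set Y) : EReal :=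
  svEntD dist F

/-- Composition of set-valued maps: `(svComp G F) x = G (F x)`. -/
def svComp (G F : Y → Set Y) : Y → Set Y := fun x => ⋃ y ∈ F x, G y

/-- `n`-fold composition of a set-valued map. -/
def svIter (F : Y → Set Y) : ℕ → Y → Set Y
  | 0 => fun x => {x}
  | n + 1 => svComp F (svIter F n)

/-- (Bowen) topological entropy of a single-valued map, as the set-valued
entropy of the associated singleton-valued map. -/
noncomputable def ent [PseudoMetricSpace Y] (f : Y → Y) : EReal :=
  svEnt fun x => {f x}

end Defs

/-- The inverse limit of the system of bonding maps `f i : X (i+1) → X i`. -/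
abbrev InvLim {X : ℕ → Type*} (f : ∀ i : ℕ, X (i + 1) → X i) :=
  {x : ∀ i, X i // ∀ i, f i (x (i + 1)) = x i}

/-- A map of the unit interval is piecewise monotone if the interval splits into
finitely many subintervals on which the map is injective. -/
def PiecewiseMonotone (f : unitInterval → unitInterval) : Prop :=
  ∃ n : ℕ, 0 < n ∧ ∃ c : Fin (n + 1) → unitInterval, StrictMono c ∧
    c 0 = 0 ∧ c (Fin.last n) = 1 ∧
    ∀ i : Fin n, Set.InjOn f (Set.Icc (c i.castSucc) (c i.succ))

/-- `c` is a critical point of `f`: an interior point at which `f` is not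
locally monotone. -/
def IsCriticalPt (f : unitInterval → unitInterval) (c : unitInterval) : Prop :=
  c ≠ 0 ∧ c ≠ 1 ∧ ¬ ∃ U ∈ nhds c, MonotoneOn f U ∨ AntitoneOn f U

/-- `f` is an open piecewise monotone map with `n - 1` critical points `t 1 < … < t (n-1)`:
it maps each of its `n` maximal intervals of monotonicity bijectively onto `[0,1]`. -/
def IsOpenFold (n : ℕ) (f : unitInterval → unitInterval)
    (t : Fin (n + 1) → unitInterval) : Prop :=
  Continuous f ∧ StrictMono t ∧ t 0 = 0 ∧ t (Fin.last n) = 1 ∧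
    ∀ i : Fin n, Set.BijOn f (Set.Icc (t i.castSucc) (t i.succ)) Set.univ

/-- A monotone arc in `I × I`: a subcontinuum on which both coordinate
projections are injective (hence homeomorphisms onto their images). -/
def IsMonotoneArc (A : Set (unitInterval × unitInterval)) : Prop :=
  IsCompact A ∧ IsConnected A ∧ Set.InjOn Prod.fst A ∧ Set.InjOn Prod.snd A

/-- Composition of relations on the unit interval: `relComp Γ Δ = Δ ∘ Γ`. -/
def relComp (Γ Δ : Set (unitInterval × unitInterval)) :
    Set (unitInterval × unitInterval) :=
  {p | ∃ y, (p.1, y) ∈ Γ ∧ (y, p.2) ∈ Δ}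

set_option maxHeartbeats 1000000

section

noncomputable instance : Inhabited unitInterval := ⟨0⟩

lemma I_nonneg (x : unitInterval) : 0 ≤ x := unitInterval.nonneg'

lemma I_le_one (x : unitInterval) : x ≤ 1 := unitInterval.le_one'

lemma I_zero_ne_one : (0 : unitInterval) ≠ 1 := by
  intro h
  have := congrArg Subtype.val h
  norm_num at this

section Fold

variable {n : ℕ} {f : unitInterval → unitInterval} {t : Fin (n + 1) → unitInterval}
  {D : Set unitInterval}

lemma fold_injOn (hf : IsOpenFold n f t) (k : Fin n) :
    InjOn f (Icc (t k.castSucc) (t k.succ)) := (hf.2.2.2.2 k).injOn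

lemma fold_surj (hf : IsOpenFold n f t) (k : Fin n) (y : unitInterval) :
    ∃ x ∈ Icc (t k.castSucc) (t k.succ), f x = y := by
  obtain ⟨x, hx, hxy⟩ := (hf.2.2.2.2 k).surjOn (mem_univ y)
  exact ⟨x, hx, hxy⟩

lemma fold_cover (hf : IsOpenFold n f t) (hn : 0 < n) (x : unitInterval) :
    ∃ k : Fin n, x ∈ Icc (t k.castSucc) (t k.succ) := by
  by_contra h
  push_neg at h
  have key : ∀ p : ℕ, ∀ hp : p ≤ n, t ⟨p, by omega⟩ ≤ x := by
    intro p
    induction p with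
    | zero =>
      intro _
      have h0 : t ⟨0, by omega⟩ = 0 := hf.2.2.1
      rw [h0]; exact I_nonneg x
    | succ q ih =>
      intro hp
      have hq : q < n := by omega
      have h1 : t ⟨q, by omega⟩ ≤ x := ih (by omega)
      have h2 := h ⟨q, hq⟩
      rw [mem_Icc] at h2
      push_neg at h2
      have e1 : (Fin.castSucc ⟨q, hq⟩ : Fin (n+1)) = ⟨q, by omega⟩ := rfl
      have e2 : (Fin.succ ⟨q, hq⟩ : Fin (n+1)) = ⟨q+1, by omega⟩ := rfl
      rw [e1, e2] at h2
      exact (h2 h1).le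
  have hlast : t ⟨n, by omega⟩ = 1 := hf.2.2.2.1
  have hx1 : x = 1 := le_antisymm (I_le_one x) (hlast ▸ key n le_rfl)
  have h3 := h ⟨n - 1, by omega⟩
  apply h3
  have e1 : (Fin.castSucc ⟨n-1, by omega⟩ : Fin (n+1)) = ⟨n-1, by omega⟩ := rfl
  have e2 : (Fin.succ ⟨n-1, by omega⟩ : Fin (n+1)) = ⟨n, by omega⟩ := by
    apply Fin.ext; simp; omega
  rw [e1, e2, mem_Icc, hlast]
  refine ⟨?_, I_le_one x⟩
  exact key (n-1) (by omega)

lemma fold_mono_or_anti (hf : IsOpenFold n f t) (k : Fin n) :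
    StrictMonoOn f (Icc (t k.castSucc) (t k.succ)) ∨
      StrictAntiOn f (Icc (t k.castSucc) (t k.succ)) :=
  ContinuousOn.strictMonoOn_of_injOn_Icc' (hf.2.1 k.castSucc_lt_succ).le
    hf.1.continuousOn (fold_injOn hf k)

lemma fold_ends (hf : IsOpenFold n f t) (k : Fin n) :
    (f (t k.castSucc) = 0 ∧ f (t k.succ) = 1) ∨
      (f (t k.castSucc) = 1 ∧ f (t k.succ) = 0) := by
  have hle : t k.castSucc ≤ t k.succ := (hf.2.1 k.castSucc_lt_succ).le
  have hmemL : t k.castSucc ∈ Icc (t k.castSucc) (t k.succ) := left_mem_Icc.2 hle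
  have hmemR : t k.succ ∈ Icc (t k.castSucc) (t k.succ) := right_mem_Icc.2 hle
  obtain ⟨x0, hx0, hfx0⟩ := fold_surj hf k 0
  obtain ⟨x1, hx1, hfx1⟩ := fold_surj hf k 1
  rcases fold_mono_or_anti hf k with hM | hA
  · left
    refine ⟨le_antisymm ?_ (I_nonneg _), le_antisymm (I_le_one _) ?_⟩
    · exact hfx0 ▸ hM.monotoneOn hmemL hx0 hx0.1
    · exact hfx1 ▸ hM.monotoneOn hx1 hmemR hx1.2
  · right
    refine ⟨le_antisymm (I_le_one _) ?_, le_antisymm ?_ (I_nonneg _)⟩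
    · exact hfx1 ▸ hA.antitoneOn hmemL hx1 hx1.1
    · exact hfx0 ▸ hA.antitoneOn hx0 hmemR hx0.2

lemma fold_endpoint (hf : IsOpenFold n f t) (hn : 0 < n) (k : Fin (n+1)) :
    f (t k) = 0 ∨ f (t k) = 1 := by
  rcases lt_or_ge k.val n with hk | hk
  · have e : k = Fin.castSucc ⟨k.val, hk⟩ := by apply Fin.ext; simp
    rw [e]
    rcases fold_ends hf ⟨k.val, hk⟩ with h | h
    · exact Or.inl h.1
    · exact Or.inr h.1
  · have hk' : k.val = n := by omega
    have e : k = Fin.succ ⟨n - 1, by omega⟩ := by apply Fin.ext; simp; omega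
    rw [e]
    rcases fold_ends hf ⟨n-1, by omega⟩ with h | h
    · exact Or.inr h.2
    · exact Or.inl h.2

lemma fold_preimage01 (hf : IsOpenFold n f t) (hn : 0 < n) :
    f ⁻¹' {0, 1} = range t := by
  ext x
  simp only [mem_preimage, mem_insert_iff, mem_singleton_iff, mem_range]
  constructor
  · intro hx
    obtain ⟨k, hk⟩ := fold_cover hf hn x
    have hle : t k.castSucc ≤ t k.succ := (hf.2.1 k.castSucc_lt_succ).le
    have hmemL : t k.castSucc ∈ Icc (t k.castSucc) (t k.succ) := left_mem_Icc.2 hle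
    have hmemR : t k.succ ∈ Icc (t k.castSucc) (t k.succ) := right_mem_Icc.2 hle
    have hinj := fold_injOn hf k
    rcases fold_ends hf k with ⟨h0, h1⟩ | ⟨h0, h1⟩ <;> rcases hx with hx | hx
    · exact ⟨_, hinj hmemL hk (by rw [h0, hx])⟩
    · exact ⟨_, hinj hmemR hk (by rw [h1, hx])⟩
    · exact ⟨_, hinj hmemR hk (by rw [h1, hx])⟩
    · exact ⟨_, hinj hmemL hk (by rw [h0, hx])⟩
  · rintro ⟨k, rfl⟩
    exact fold_endpoint hf hn k

lemma fold_count_Icc (hf : IsOpenFold n f t) (hD : D.Finite) (k : Fin n) :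
    (f ⁻¹' D ∩ Icc (t k.castSucc) (t k.succ)).Finite ∧
      f '' (f ⁻¹' D ∩ Icc (t k.castSucc) (t k.succ)) = D ∧
      (f ⁻¹' D ∩ Icc (t k.castSucc) (t k.succ)).ncard = D.ncard := by
  set S := f ⁻¹' D ∩ Icc (t k.castSucc) (t k.succ) with hS
  have hinj : InjOn f S := (fold_injOn hf k).mono inter_subset_right
  have himg : f '' S = D := by
    apply Subset.antisymm
    · rintro y ⟨x, ⟨hx1, _⟩, rfl⟩; exact hx1
    · intro d hd
      obtain ⟨x, hx, rfl⟩ := fold_surj hf k d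
      exact ⟨x, ⟨hd, hx⟩, rfl⟩
  have hfin : S.Finite := Finite.of_finite_image (himg ▸ hD) hinj
  exact ⟨hfin, himg, by rw [← himg, ncard_image_of_injOn hinj]⟩

lemma fold_count_Ico (hf : IsOpenFold n f t) (hD : D.Finite)
    (h0 : (0 : unitInterval) ∈ D) (h1 : (1 : unitInterval) ∈ D) (k : Fin n) :
    (f ⁻¹' D ∩ Ico (t k.castSucc) (t k.succ)).Finite ∧
      (f ⁻¹' D ∩ Ico (t k.castSucc) (t k.succ)).ncard = D.ncard - 1 := by
  obtain ⟨hfin, _, hcard⟩ := fold_count_Icc hf hD k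
  have hle : t k.castSucc ≤ t k.succ := (hf.2.1 k.castSucc_lt_succ).le
  have hsub : f ⁻¹' D ∩ Ico (t k.castSucc) (t k.succ) ⊆
      f ⁻¹' D ∩ Icc (t k.castSucc) (t k.succ) :=
    inter_subset_inter_right _ Ico_subset_Icc_self
  have hfin' : (f ⁻¹' D ∩ Ico (t k.castSucc) (t k.succ)).Finite := hfin.subset hsub
  refine ⟨hfin', ?_⟩
  have hsuccD : f (t k.succ) ∈ D := by
    rcases fold_ends hf k with h | h
    · rw [h.2]; exact h1
    · rw [h.2]; exact h0
  have heq : f ⁻¹' D ∩ Icc (t k.castSucc) (t k.succ) =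
      insert (t k.succ) (f ⁻¹' D ∩ Ico (t k.castSucc) (t k.succ)) := by
    ext x
    simp only [mem_inter_iff, mem_preimage, mem_Icc, mem_Ico, mem_insert_iff]
    constructor
    · rintro ⟨hxD, hxl, hxr⟩
      rcases eq_or_lt_of_le hxr with h | h
      · exact Or.inl h
      · exact Or.inr ⟨hxD, hxl, h⟩
    · rintro (rfl | ⟨hxD, hxl, hxr⟩)
      · exact ⟨hsuccD, hle, le_rfl⟩
      · exact ⟨hxD, hxl, hxr.le⟩
  have hnm : t k.succ ∉ f ⁻¹' D ∩ Ico (t k.castSucc) (t k.succ) := by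
    rintro ⟨-, -, h⟩; exact lt_irrefl _ h
  rw [heq, ncard_insert_of_notMem hnm hfin'] at hcard
  omega

lemma fold_count_Iio (hf : IsOpenFold n f t) (hD : D.Finite)
    (h0 : (0 : unitInterval) ∈ D) (h1 : (1 : unitInterval) ∈ D) (i : Fin (n+1)) :
    (f ⁻¹' D ∩ Iio (t i)).Finite ∧
      (f ⁻¹' D ∩ Iio (t i)).ncard = i.val * (D.ncard - 1) := by
  induction i using Fin.induction with
  | zero =>
    have hIio : Iio (t 0) = (∅ : Set unitInterval) := by
      rw [hf.2.2.1]
      ext x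
      simp only [mem_Iio, mem_empty_iff_false, iff_false, not_lt]
      exact I_nonneg x
    rw [hIio, inter_empty]
    simp
  | succ k ih =>
    have hIcoF := fold_count_Ico hf hD h0 h1 k
    have hdec : f ⁻¹' D ∩ Iio (t k.succ) =
        (f ⁻¹' D ∩ Iio (t k.castSucc)) ∪ (f ⁻¹' D ∩ Ico (t k.castSucc) (t k.succ)) := by
      rw [← inter_union_distrib_left]
      congr 1
      ext x
      simp only [mem_Iio, mem_union, mem_Ico]
      constructor
      · intro hx
        rcases lt_or_ge x (t k.castSucc) with h | h
        · exact Or.inl h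
        · exact Or.inr ⟨h, hx⟩
      · rintro (h | ⟨-, h⟩)
        · exact h.trans (hf.2.1 k.castSucc_lt_succ)
        · exact h
    have hdisj : Disjoint (f ⁻¹' D ∩ Iio (t k.castSucc))
        (f ⁻¹' D ∩ Ico (t k.castSucc) (t k.succ)) := by
      refine Disjoint.mono inf_le_right inf_le_right ?_
      rw [disjoint_left]
      rintro x hx ⟨hx2, -⟩
      exact absurd hx2 (not_le_of_gt hx)
    rw [hdec]
    refine ⟨ih.1.union hIcoF.1, ?_⟩
    rw [ncard_union_eq hdisj ih.1 hIcoF.1, ih.2, hIcoF.2]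
    simp only [Fin.val_succ, Fin.coe_castSucc]
    ring

lemma fold_preimage_finite (hf : IsOpenFold n f t) (hn : 0 < n) (hD : D.Finite) :
    (f ⁻¹' D).Finite := by
  have hsub : f ⁻¹' D ⊆ ⋃ k : Fin n, (f ⁻¹' D ∩ Icc (t k.castSucc) (t k.succ)) := by
    intro x hx
    obtain ⟨k, hk⟩ := fold_cover hf hn x
    exact mem_iUnion.2 ⟨k, hx, hk⟩
  exact Finite.subset (finite_iUnion fun k => (fold_count_Icc hf hD k).1) hsub

lemma fold_fiber (hf : IsOpenFold n f t) (hn : 0 < n) {y : unitInterval}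
    (hy0 : y ≠ 0) (hy1 : y ≠ 1) :
    (f ⁻¹' {y}).Finite ∧ (f ⁻¹' {y}).ncard = n := by
  have hlast := hf.2.2.2.1
  set D : Set unitInterval := {0, y, 1} with hD
  have hDfin : D.Finite := ((finite_singleton 1).insert y).insert 0
  have hDcard : D.ncard = 3 := by
    rw [hD, ncard_insert_of_notMem (by simp [Ne.symm hy0, I_zero_ne_one])
        ((finite_singleton 1).insert y),
      ncard_insert_of_notMem (by simp [hy1]) (finite_singleton 1), ncard_singleton]
  set D2 : Set unitInterval := {0, 1} with hD2
  have hD2fin : D2.Finite := (finite_singleton 1).insert 0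
  have hD2card : D2.ncard = 2 := by
    rw [hD2, ncard_insert_of_notMem (by simp [I_zero_ne_one]) (finite_singleton 1),
      ncard_singleton]
  obtain ⟨hAfin, hAcard⟩ := fold_count_Iio hf hDfin (by simp [hD]) (by simp [hD]) (Fin.last n)
  obtain ⟨hBfin, hBcard⟩ := fold_count_Iio hf hD2fin (by simp [hD2]) (by simp [hD2]) (Fin.last n)
  rw [hlast] at hAfin hAcard hBfin hBcard
  have hf1 : f 1 = 0 ∨ f 1 = 1 := by
    have := fold_endpoint hf hn (Fin.last n)
    rwa [hlast] at this
  have heq : f ⁻¹' {y} = (f ⁻¹' D ∩ Iio 1) \ (f ⁻¹' D2 ∩ Iio 1) := by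
    ext x
    simp only [mem_preimage, mem_singleton_iff, mem_diff, mem_inter_iff, mem_Iio, hD, hD2,
      mem_insert_iff]
    constructor
    · intro hx
      have hx1 : x ≠ 1 := by
        rintro rfl
        rcases hf1 with h | h
        · exact hy0 (hx ▸ h.symm ▸ rfl)
        · exact hy1 (hx ▸ h.symm ▸ rfl)
      have hxlt : x < 1 := lt_of_le_of_ne (I_le_one x) hx1
      refine ⟨⟨Or.inr (Or.inl hx), hxlt⟩, ?_⟩
      rintro ⟨(h | h), -⟩
      · exact hy0 (hx ▸ h)
      · exact hy1 (hx ▸ h)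
    · rintro ⟨⟨hxD, hxlt⟩, hnot⟩
      rcases hxD with h | h | h
      · exact absurd ⟨Or.inl h, hxlt⟩ hnot
      · exact h
      · exact absurd ⟨Or.inr h, hxlt⟩ hnot
  have hsub : f ⁻¹' D2 ∩ Iio 1 ⊆ f ⁻¹' D ∩ Iio 1 := by
    rintro x ⟨hx, hxlt⟩
    refine ⟨?_, hxlt⟩
    rcases hx with h | h
    · exact Or.inl h
    · exact Or.inr (Or.inr h)
  rw [heq]
  refine ⟨hAfin.diff, ?_⟩
  rw [ncard_diff hsub (hAfin.subset hsub), hAcard, hBcard, hDcard, hD2card]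
  simp only [Fin.val_last]
  omega

end Fold

lemma lt_iff_count {E : Set unitInterval} (hE : E.Finite) {x y : unitInterval}
    (hx : x ∈ E) (hy : y ∈ E) : x < y ↔ (E ∩ Iio x).ncard < (E ∩ Iio y).ncard := by
  have aux : ∀ a b : unitInterval, a ∈ E → a < b →
      (E ∩ Iio a).ncard < (E ∩ Iio b).ncard := by
    intro a b ha hab
    apply ncard_lt_ncard _ (hE.inter_of_left _)
    constructor
    · exact inter_subset_inter_right E (Iio_subset_Iio hab.le)
    · intro hsub
      obtain ⟨-, h2⟩ := hsub ⟨ha, hab⟩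
      exact lt_irrefl a h2
  constructor
  · exact aux x y hx
  · intro h
    rcases lt_trichotomy x y with h' | h' | h'
    · exact h'
    · subst h'; exact absurd h (lt_irrefl _)
    · have := aux y x hy h'
      omega

lemma strong_commute {Fn Fm : unitInterval → unitInterval}
    (hstrong : ∀ x, Fn '' (Fm ⁻¹' {x}) = Fm ⁻¹' {Fn x}) (z : unitInterval) :
    Fm (Fn z) = Fn (Fm z) := by
  have hz : Fn z ∈ Fn '' (Fm ⁻¹' {Fm z}) := mem_image_of_mem Fn rfl
  rw [hstrong] at hz
  exact hz

lemma I_pos {x : unitInterval} (h : x ≠ 0) : (0:ℝ) < x.val :=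
  lt_of_le_of_ne x.2.1 (fun he => h (Subtype.ext he.symm))

lemma I_lt_one' {x : unitInterval} (h : x ≠ 1) : x.val < 1 :=
  lt_of_le_of_ne x.2.2 (fun he => h (Subtype.ext he))

lemma fold_nhds_end {m : ℕ} {f : unitInterval → unitInterval}
    {s : Fin (m + 1) → unitInterval} (hm : 0 < m) (hf : IsOpenFold m f s)
    {z : unitInterval} (hz : z = 0 ∨ z = 1) :
    ∃ k : Fin m, Icc (s k.castSucc) (s k.succ) ∈ nhds z := by
  rcases hz with h | h
  · refine ⟨⟨0, by omega⟩, ?_⟩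
    have e0 : s (⟨0, by omega⟩ : Fin m).castSucc = 0 := hf.2.2.1
    have h01 : (0 : unitInterval) < s (⟨0, by omega⟩ : Fin m).succ := by
      rw [← e0]; exact hf.2.1 (Fin.castSucc_lt_succ)
    rw [h]
    refine mem_of_superset (isOpen_Iio.mem_nhds h01) ?_
    intro x hx
    rw [mem_Icc, e0]
    exact ⟨I_nonneg x, hx.le⟩
  · refine ⟨⟨m - 1, by omega⟩, ?_⟩
    have e1 : (⟨m - 1, by omega⟩ : Fin m).succ = Fin.last m := by
      apply Fin.ext; simp; omega
    have e1' : s (⟨m - 1, by omega⟩ : Fin m).succ = 1 := by rw [e1]; exact hf.2.2.2.1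
    have h01 : s (⟨m - 1, by omega⟩ : Fin m).castSucc < 1 := by
      rw [← e1']; exact hf.2.1 (Fin.castSucc_lt_succ)
    rw [h]
    refine mem_of_superset (isOpen_Ioi.mem_nhds h01) ?_
    intro x hx
    rw [mem_Icc, e1']
    exact ⟨hx.le, I_le_one x⟩

lemma no_common_crit' {n m : ℕ} {Fn Fm : unitInterval → unitInterval}
    {t : Fin (n + 1) → unitInterval} {s : Fin (m + 1) → unitInterval}
    (hm : 2 ≤ m) (hn : 0 < n)
    (hFn : IsOpenFold n Fn t) (hFm : IsOpenFold m Fm s)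
    (hstrong : ∀ x, Fn '' (Fm ⁻¹' {x}) = Fm ⁻¹' {Fn x})
    (i : Fin (n + 1)) (j : Fin (m + 1)) (hj1 : 0 < j.val) (hj2 : j.val < m) :
    t i ≠ s j := by
  intro hts
  have hm0 : 0 < m := by omega
  set c := t i with hc
  have hrt : Fn ⁻¹' {0, 1} = range t := fold_preimage01 hFn hn
  have hrs : Fm ⁻¹' {0, 1} = range s := fold_preimage01 hFm hm0
  -- branches of Fm around c
  set jm : Fin m := ⟨j.val - 1, by omega⟩ with hjm
  set jp : Fin m := ⟨j.val, hj2⟩ with hjp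
  have ejm1 : jm.succ = j := by apply Fin.ext; simp [hjm]; omega
  have ejp0 : jp.castSucc = j := by apply Fin.ext; simp [hjp]
  set sL := s jm.castSucc with hsL
  set sR := s jp.succ with hsR
  have hLc : sL < c := by
    rw [hts, ← ejm1]; exact hFm.2.1 (Fin.castSucc_lt_succ (i := jm))
  have hcR : c < sR := by
    rw [hts, ← ejp0]; exact hFm.2.1 (Fin.castSucc_lt_succ (i := jp))
  -- value of Fn at c is 0 or 1 ; choose the Fm-branch K that is a neighborhood of it
  have hw : Fn c = 0 ∨ Fn c = 1 := fold_endpoint hFn hn i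
  have hFmc : Fm c = 0 ∨ Fm c = 1 := by rw [hts]; exact fold_endpoint hFm hm0 j
  obtain ⟨k, hKnhds⟩ := fold_nhds_end hm0 hFm hw
  have hKinj : InjOn Fm (Icc (s k.castSucc) (s k.succ)) := fold_injOn hFm k
  have hpre : Fn ⁻¹' (Icc (s k.castSucc) (s k.succ)) ∈ nhds c :=
    hFn.1.continuousAt.preimage_mem_nhds hKnhds
  obtain ⟨ε, hε, hball⟩ := Metric.mem_nhds_iff.1 hpre
  -- the point a to the left of c, within ε, inside branch (j-1)
  have hLcv : sL.val < c.val := Subtype.coe_lt_coe.2 hLc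
  have hcRv : c.val < sR.val := Subtype.coe_lt_coe.2 hcR
  set ra : ℝ := max sL.val (c.val - ε) with hra
  have hra1 : ra < c.val := max_lt hLcv (by linarith)
  have hra2 : sL.val ≤ ra := le_max_left _ _
  have hra3 : c.val - ε ≤ ra := le_max_right _ _
  set a : unitInterval := ⟨(ra + c.val) / 2, by
    constructor
    · have h1 := sL.2.1; linarith
    · have h1 := c.2.2; linarith⟩ with ha
  have hsLa : sL < a := by
    rw [← Subtype.coe_lt_coe]
    show sL.val < (ra + c.val) / 2
    linarith
  have hac : a < c := by
    rw [← Subtype.coe_lt_coe]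
    show (ra + c.val) / 2 < c.val
    linarith
  have haε : c.val - a.val < ε := by
    show c.val - (ra + c.val) / 2 < ε
    linarith
  -- the point b to the right of c
  set rb : ℝ := min sR.val (c.val + ε) with hrb
  have hrb1 : c.val < rb := lt_min hcRv (by linarith)
  have hrb2 : rb ≤ sR.val := min_le_left _ _
  have hrb3 : rb ≤ c.val + ε := min_le_right _ _
  set b : unitInterval := ⟨(rb + c.val) / 2, by
    constructor
    · have h1 := c.2.1; linarith
    · have h1 := sR.2.2; linarith⟩ with hb
  have hbsR : b < sR := by
    rw [← Subtype.coe_lt_coe]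
    show (rb + c.val) / 2 < sR.val
    linarith
  have hcb : c < b := by
    rw [← Subtype.coe_lt_coe]
    show c.val < (rb + c.val) / 2
    linarith
  have hbε : b.val - c.val < ε := by
    show (rb + c.val) / 2 - c.val < ε
    linarith
  -- Fm a and Fm b are interior values
  have hnotrange : ∀ x : unitInterval, sL < x → x < sR → x ≠ c → x ∉ range s := by
    rintro x hx1 hx2 hx3 ⟨l, hl⟩
    rcases lt_trichotomy l j with h | h | h
    · have : l ≤ jm.castSucc := by
        rw [Fin.le_def]; simp [hjm]
        omega
      have : s l ≤ sL := (hFm.2.1.le_iff_le).2 this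
      rw [hl] at this
      exact absurd hx1 (not_lt_of_ge this)
    · exact hx3 (by rw [← hl, h, ← hts])
    · have : jp.succ ≤ l := by
        rw [Fin.le_def]; simp [hjp]
        omega
      have : sR ≤ s l := (hFm.2.1.le_iff_le).2 this
      rw [hl] at this
      exact absurd hx2 (not_lt_of_ge this)
  have hval01 : ∀ x : unitInterval, x ∉ range s → Fm x ≠ 0 ∧ Fm x ≠ 1 := by
    intro x hx
    constructor <;> intro h <;> apply hx <;> rw [← hrs]
    · exact Or.inl h
    · exact Or.inr h
  have hFma := hval01 a (hnotrange a hsLa (hac.trans hcR) hac.ne)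
  have hFmb := hval01 b (hnotrange b (hLc.trans hcb) hbsR hcb.ne')
  -- choose the regular value Y
  set bad : Set ℝ := Subtype.val '' (range t) with hbad
  have hbadfin : bad.Finite := (finite_range t).image _
  obtain ⟨Y, hY0, hY1, hYt, hYa, hYb⟩ : ∃ Y : unitInterval, Y ≠ 0 ∧ Y ≠ 1 ∧ Y ∉ range t ∧
      Y ∈ uIcc (Fm a) (Fm c) ∧ Y ∈ uIcc (Fm b) (Fm c) := by
    rcases hFmc with hv | hv
    · have hmin : (0:ℝ) < min (Fm a).val (Fm b).val := lt_min (I_pos hFma.1) (I_pos hFmb.1)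
      obtain ⟨yv, hyv⟩ := ((Set.Ioo_infinite hmin).diff hbadfin).nonempty
      obtain ⟨⟨hyv1, hyv2⟩, hyv3⟩ := hyv
      have hyle : yv ≤ (Fm a).val := hyv2.le.trans (min_le_left _ _)
      have hyle' : yv ≤ (Fm b).val := hyv2.le.trans (min_le_right _ _)
      refine ⟨⟨yv, hyv1.le, hyle.trans (Fm a).2.2⟩, ?_, ?_, ?_, ?_, ?_⟩
      · intro h; exact absurd (congrArg Subtype.val h) (by simpa using hyv1.ne')
      · intro h
        rw [Subtype.ext_iff] at h
        norm_num at h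
        have := I_lt_one' hFma.2
        linarith
      · rintro ⟨l, hl⟩
        exact hyv3 ⟨t l, ⟨l, rfl⟩, by rw [hl]⟩
      · rw [mem_uIcc]
        right
        rw [hv]
        constructor
        · rw [← Subtype.coe_le_coe]; exact hyv1.le
        · rw [← Subtype.coe_le_coe]; exact hyle
      · rw [mem_uIcc]
        right
        rw [hv]
        constructor
        · rw [← Subtype.coe_le_coe]; exact hyv1.le
        · rw [← Subtype.coe_le_coe]; exact hyle'
    · have hmax : max (Fm a).val (Fm b).val < 1 := max_lt (I_lt_one' hFma.2) (I_lt_one' hFmb.2)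
      obtain ⟨yv, hyv⟩ := ((Set.Ioo_infinite hmax).diff hbadfin).nonempty
      obtain ⟨⟨hyv1, hyv2⟩, hyv3⟩ := hyv
      have hyge : (Fm a).val ≤ yv := (le_max_left _ _).trans hyv1.le
      have hyge' : (Fm b).val ≤ yv := (le_max_right _ _).trans hyv1.le
      refine ⟨⟨yv, ((Fm a).2.1.trans hyge), hyv2.le⟩, ?_, ?_, ?_, ?_, ?_⟩
      · intro h
        rw [Subtype.ext_iff] at h
        norm_num at h
        have := I_pos hFma.1
        linarith
      · intro h; exact absurd (congrArg Subtype.val h) (by simpa using hyv2.ne)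
      · rintro ⟨l, hl⟩
        exact hyv3 ⟨t l, ⟨l, rfl⟩, by rw [hl]⟩
      · rw [mem_uIcc]
        left
        rw [hv]
        constructor
        · rw [← Subtype.coe_le_coe]; exact hyge
        · rw [← Subtype.coe_le_coe]; exact hyv2.le
      · rw [mem_uIcc]
        left
        rw [hv]
        constructor
        · rw [← Subtype.coe_le_coe]; exact hyge'
        · rw [← Subtype.coe_le_coe]; exact hyv2.le
  -- IVT: preimages of Y near c on both sides
  have hIVTa : Y ∈ Fm '' Icc a c := by
    have hsub := intermediate_value_uIcc (f := Fm) (a := a) (b := c) hFm.1.continuousOn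
    have := hsub hYa
    rwa [uIcc_of_le hac.le] at this
  obtain ⟨a', ha'mem, ha'Y⟩ := hIVTa
  have hIVTb : Y ∈ Fm '' Icc c b := by
    have hsub := intermediate_value_uIcc (f := Fm) (a := b) (b := c) hFm.1.continuousOn
    have := hsub hYb
    rwa [uIcc_of_ge hcb.le] at this
  obtain ⟨b', hb'mem, hb'Y⟩ := hIVTb
  have hY01 : Y ≠ Fm c := by
    rcases hFmc with h | h <;> rw [h]
    · exact hY0
    · exact hY1
  have ha'c : a' ≠ c := by rintro rfl; exact hY01 ha'Y.symm
  have hb'c : b' ≠ c := by rintro rfl; exact hY01 hb'Y.symm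
  have ha'lt : a' < c := lt_of_le_of_ne ha'mem.2 ha'c
  have hb'gt : c < b' := lt_of_le_of_ne (le_of_lt (lt_of_le_of_ne hb'mem.1 (Ne.symm hb'c))) (Ne.symm hb'c)
  have ha'ball : a' ∈ Metric.ball c ε := by
    rw [Metric.mem_ball, Subtype.dist_eq, Real.dist_eq, abs_lt]
    have h1 : a.val ≤ a'.val := Subtype.coe_le_coe.2 ha'mem.1
    have h2 : a'.val ≤ c.val := Subtype.coe_le_coe.2 ha'mem.2
    constructor <;> linarith
  have hb'ball : b' ∈ Metric.ball c ε := by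
    rw [Metric.mem_ball, Subtype.dist_eq, Real.dist_eq, abs_lt]
    have h1 : c.val ≤ b'.val := Subtype.coe_le_coe.2 hb'mem.1
    have h2 : b'.val ≤ b.val := Subtype.coe_le_coe.2 hb'mem.2
    constructor <;> linarith
  -- fibers and injectivity
  have hFnY : Fn Y ≠ 0 ∧ Fn Y ≠ 1 := by
    constructor <;> intro h <;> apply hYt <;> rw [← hrt]
    · exact Or.inl h
    · exact Or.inr h
  have hSfc := fold_fiber hFm hm0 hY0 hY1
  have hS'fc := fold_fiber hFm hm0 hFnY.1 hFnY.2
  have himg : Fn '' (Fm ⁻¹' {Y}) = Fm ⁻¹' {Fn Y} := hstrong Y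
  have hinj : InjOn Fn (Fm ⁻¹' {Y}) := by
    apply injOn_of_ncard_image_eq _ hSfc.1
    rw [himg, hS'fc.2, hSfc.2]
  have ha'S : a' ∈ Fm ⁻¹' {Y} := by rw [mem_preimage, mem_singleton_iff]; exact ha'Y
  have hb'S : b' ∈ Fm ⁻¹' {Y} := by rw [mem_preimage, mem_singleton_iff]; exact hb'Y
  have hne' : Fn a' ≠ Fn b' := by
    intro h
    exact (ha'lt.trans hb'gt).ne (hinj ha'S hb'S h)
  have hKa : Fn a' ∈ Icc (s k.castSucc) (s k.succ) := hball ha'ball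
  have hKb : Fn b' ∈ Icc (s k.castSucc) (s k.succ) := hball hb'ball
  have h1 : Fn a' ∈ Fm ⁻¹' {Fn Y} := himg ▸ mem_image_of_mem Fn ha'S
  have h2 : Fn b' ∈ Fm ⁻¹' {Fn Y} := himg ▸ mem_image_of_mem Fn hb'S
  rw [mem_preimage, mem_singleton_iff] at h1 h2
  exact hne' (hKinj hKa hKb (by rw [h1, h2]))

section Main

variable {n m : ℕ} {Fn Fm : unitInterval → unitInterval}
  {t : Fin (n + 1) → unitInterval} {s : Fin (m + 1) → unitInterval}

lemma key_lt (hm : 0 < m) (hn : 0 < n)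
    (hFn : IsOpenFold n Fn t) (hFm : IsOpenFold m Fm s)
    (hstrong : ∀ x, Fn '' (Fm ⁻¹' {x}) = Fm ⁻¹' {Fn x})
    (i : Fin (n + 1)) (j : Fin (m + 1)) :
    (t i < s j ↔ i.val * m < j.val * n) ∧ (s j < t i ↔ j.val * n < i.val * m) := by
  have hcomm := strong_commute hstrong
  set E : Set unitInterval := Fm ⁻¹' (range t) with hE
  have hrt : Fn ⁻¹' {0, 1} = range t := fold_preimage01 hFn hn
  have hrs : Fm ⁻¹' {0, 1} = range s := fold_preimage01 hFm hm
  have hE2 : E = Fn ⁻¹' (range s) := by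
    rw [hE, ← hrt, ← hrs]
    ext x
    simp only [mem_preimage, mem_insert_iff, mem_singleton_iff]
    rw [hcomm x]
  have hrtfin : (range t).Finite := finite_range t
  have hrsfin : (range s).Finite := finite_range s
  have hEfin : E.Finite := fold_preimage_finite hFm hm hrtfin
  have hrtcard : (range t).ncard = n + 1 := by
    rw [← image_univ, ncard_image_of_injective _ hFn.2.1.injective]
    simp [ncard_univ]
  have hrscard : (range s).ncard = m + 1 := by
    rw [← image_univ, ncard_image_of_injective _ hFm.2.1.injective]
    simp [ncard_univ]
  have h0s : (0 : unitInterval) ∈ range s := ⟨0, hFm.2.2.1⟩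
  have h1s : (1 : unitInterval) ∈ range s := ⟨Fin.last m, hFm.2.2.2.1⟩
  have h0t : (0 : unitInterval) ∈ range t := ⟨0, hFn.2.2.1⟩
  have h1t : (1 : unitInterval) ∈ range t := ⟨Fin.last n, hFn.2.2.2.1⟩
  have hcountT : ∀ i : Fin (n+1), (E ∩ Iio (t i)).ncard = i.val * m := by
    intro i
    have h := (fold_count_Iio hFn hrsfin h0s h1s i).2
    rw [hrscard] at h
    rw [hE2]
    simpa using h
  have hcountS : ∀ j : Fin (m+1), (E ∩ Iio (s j)).ncard = j.val * n := by
    intro j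
    have h := (fold_count_Iio hFm hrtfin h0t h1t j).2
    rw [hrtcard] at h
    rw [hE]
    simpa using h
  have hmemT : ∀ i : Fin (n+1), t i ∈ E := by
    intro i
    rw [hE2]
    rcases fold_endpoint hFn hn i with h | h
    · exact ⟨0, by rw [hFm.2.2.1, h]⟩
    · exact ⟨Fin.last m, by rw [hFm.2.2.2.1, h]⟩
  have hmemS : ∀ j : Fin (m+1), s j ∈ E := by
    intro j
    rw [hE]
    rcases fold_endpoint hFm hm j with h | h
    · exact ⟨0, by rw [hFn.2.2.1, h]⟩
    · exact ⟨Fin.last n, by rw [hFn.2.2.2.1, h]⟩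
  constructor
  · rw [lt_iff_count hEfin (hmemT i) (hmemS j), hcountT i, hcountS j]
  · rw [lt_iff_count hEfin (hmemS j) (hmemT i), hcountS j, hcountT i]

lemma no_common_crit (hm : 2 ≤ m) (hn : 0 < n)
    (hFn : IsOpenFold n Fn t) (hFm : IsOpenFold m Fm s)
    (hstrong : ∀ x, Fn '' (Fm ⁻¹' {x}) = Fm ⁻¹' {Fn x})
    (i : Fin (n + 1)) (j : Fin (m + 1)) (hj1 : 0 < j.val) (hj2 : j.val < m) :
    t i ≠ s j :=
  no_common_crit' hm hn hFn hFm hstrong i j hj1 hj2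

end Main

/-- for strongly commuting open folding maps `Fn` (critical points
`t 1 < … < t (n-1)`) and `Fm` (critical points `s 1 < … < s (m-1)`) with
`n > m ≥ 2`, one has `t i < s j < t (i+1)` iff `i = ⌊n·j/m⌋`. -/
theorem stmt_7 (n m : ℕ) (hm : 2 ≤ m) (hnm : m < n)
    (Fn Fm : unitInterval → unitInterval)
    (t : Fin (n + 1) → unitInterval) (s : Fin (m + 1) → unitInterval)
    (hFn : IsOpenFold n Fn t) (hFm : IsOpenFold m Fm s)
    (hstrong : ∀ x, Fn '' (Fm ⁻¹' {x}) = Fm ⁻¹' {Fn x}) :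
    ∀ (i j : ℕ) (hi : i < n) (hj1 : 0 < j) (hj2 : j < m),
      (t ⟨i, by omega⟩ < s ⟨j, by omega⟩ ∧ s ⟨j, by omega⟩ < t ⟨i + 1, by omega⟩) ↔
        i = n * j / m := by
  intro i j hi hj1 hj2
  have hn : 0 < n := by omega
  have hm0 : 0 < m := by omega
  have k1 := key_lt hm0 hn hFn hFm hstrong ⟨i, by omega⟩ ⟨j, by omega⟩
  have k2 := key_lt hm0 hn hFn hFm hstrong ⟨i + 1, by omega⟩ ⟨j, by omega⟩
  have hne : t ⟨i, by omega⟩ ≠ s ⟨j, by omega⟩ :=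
    no_common_crit hm hn hFn hFm hstrong _ _ hj1 hj2
  simp only [Fin.val_mk] at k1 k2
  constructor
  · rintro ⟨h1, h2⟩
    have a1 : i * m ≤ n * j := by
      have := (k1.1).1 h1
      calc i * m ≤ j * n := this.le
        _ = n * j := Nat.mul_comm _ _
    have a2 : n * j < (i + 1) * m := by
      have := (k2.2).1 h2
      rwa [Nat.mul_comm j n] at this
    exact (Nat.div_eq_of_lt_le a1 a2).symm
  · intro hij
    have hle : i * m ≤ n * j := by rw [hij]; exact Nat.div_mul_le_self _ _
    have hlt : n * j < (i + 1) * m := by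
      rw [hij]
      have h2' : n * j % m < m := Nat.mod_lt _ hm0
      calc n * j = m * (n * j / m) + n * j % m := (Nat.div_add_mod _ _).symm
        _ < m * (n * j / m) + m := Nat.add_lt_add_left h2' _
        _ = (n * j / m + 1) * m := by ring
    have hstrict : i * m ≠ n * j := by
      intro he
      apply hne
      have hnlt1 : ¬ t ⟨i, by omega⟩ < s ⟨j, by omega⟩ := by
        rw [k1.1, Nat.mul_comm j n, ← he]
        exact lt_irrefl _
      have hnlt2 : ¬ s ⟨j, by omega⟩ < t ⟨i, by omega⟩ := by
        rw [k1.2, Nat.mul_comm j n, ← he]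
        exact lt_irrefl _
      rcases lt_trichotomy (t ⟨i, (by omega : i < n + 1)⟩) (s ⟨j, (by omega : j < m + 1)⟩) with
        h | h | h
      · exact absurd h hnlt1
      · exact h
      · exact absurd h hnlt2
    refine ⟨?_, ?_⟩
    · rw [k1.1, Nat.mul_comm j n]
      exact lt_of_le_of_ne hle hstrict
    · rw [k2.2, Nat.mul_comm j n]
      exact hlt

end
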